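/- For positive integers k, m and nonnegative integers a, b, n with a ≤ m, b ≤ n, n ≥ km, and 0 ≤ b − ka ≤ k, the number of monotone lattice paths from (a, b) to (m, n) that stay weakly above the line y = kx equals ((n+1−km)/(n+1−ka)) · C(m+n−(k+1)a, m−a). -/

import Mathlib

open Finset

/-- A monotone lattice path from `s` to `t` using unit steps `(1,0)` and `(0,1)`. -/
def MonoPath (s t : ℤ × ℤ) (P : List (ℤ × ℤ)) : Prop :=
  P.head? = some s ∧ P.getLast? = some t ∧
  P.Chain' (fun p q => q = (p.1 + 1, p.2) ∨ q = (p.1, p.2 + 1))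

/-- Integer binomial coefficient, `0` for negative lower index. -/
def IC (x j : ℤ) : ℕ := if j < 0 then 0 else x.toNat.choose j.toNat

/-- Number of monotone lattice paths from `(a,b)` to `(m,n)` staying weakly above `y = kx - r`. -/
noncomputable def NW (k r a b m n : ℤ) : ℕ :=
  Set.ncard {P : List (ℤ × ℤ) | MonoPath (a, b) (m, n) P ∧ ∀ p ∈ P, k * p.1 - r ≤ p.2}

/-- Number of monotone lattice paths from `(a,b)` to `(m,n)` staying strictly above `y = kx - r`. -/
noncomputable def NS (k r a b m n : ℤ) : ℕ :=
  Set.ncard {P : List (ℤ × ℤ) | MonoPath (a, b) (m, n) P ∧ ∀ p ∈ P, k * p.1 - r < p.2}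

lemma monoPath_stats : ∀ {P : List (ℤ × ℤ)} {s t : ℤ × ℤ}, MonoPath s t P →
    s.1 ≤ t.1 ∧ s.2 ≤ t.2 ∧ s.1 + s.2 + (P.length : ℤ) = t.1 + t.2 + 1
  | [], s, t, h => by simp [MonoPath] at h
  | [x], s, t, h => by
      obtain ⟨h1, h2, -⟩ := h
      simp only [List.head?_cons, Option.some_inj] at h1
      simp only [List.getLast?_singleton, Option.some_inj] at h2
      subst h1; subst h2
      simp
  | x :: y :: l, s, t, h => by
      obtain ⟨h1, h2, h3⟩ := h
      simp only [List.head?_cons, Option.some_inj] at h1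
      rw [List.getLast?_cons_cons] at h2
      simp only [List.Chain', List.isChain_cons_cons] at h3
      have IH := monoPath_stats (P := y :: l) (s := y) (t := t) ⟨rfl, h2, h3.2⟩
      subst h1
      obtain ⟨i1, i2, i3⟩ := IH
      simp only [List.length_cons] at i3 ⊢
      push_cast at i3 ⊢
      rcases h3.1 with hxy | hxy <;>
        (rw [Prod.ext_iff] at hxy; obtain ⟨e1, e2⟩ := hxy; refine ⟨by omega, by omega, by omega⟩)

lemma monoPath_ne_nil {s t : ℤ × ℤ} {P : List (ℤ × ℤ)} (h : MonoPath s t P) : P ≠ [] := by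
  rintro rfl; simp [MonoPath] at h

lemma monoPath_self {s : ℤ × ℤ} {P : List (ℤ × ℤ)} (h : MonoPath s s P) : P = [s] := by
  have hs := monoPath_stats h
  have hlen : P.length = 1 := by omega
  obtain ⟨x, rfl⟩ := List.length_eq_one_iff.mp hlen
  obtain ⟨h1, -, -⟩ := h
  simp only [List.head?_cons, Option.some_inj] at h1
  rw [h1]

lemma monoPath_singleton (s : ℤ × ℤ) : MonoPath s s [s] :=
  ⟨rfl, rfl, List.isChain_singleton s⟩

lemma monoPath_last_mem {s t : ℤ × ℤ} {P : List (ℤ × ℤ)} (h : MonoPath s t P) : t ∈ P := by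
  obtain ⟨he, hx⟩ := List.mem_getLast?_eq_getLast h.2.1
  rw [hx]; exact List.getLast_mem he

lemma monoPath_concat {s q t : ℤ × ℤ} {Q : List (ℤ × ℤ)} (h : MonoPath s q Q)
    (hqt : t = (q.1 + 1, q.2) ∨ t = (q.1, q.2 + 1)) : MonoPath s t (Q ++ [t]) := by
  obtain ⟨h1, h2, h3⟩ := h
  have hQ : Q ≠ [] := by rintro rfl; simp at h1
  refine ⟨?_, ?_, ?_⟩
  · rw [List.head?_append_of_ne_nil _ hQ]; exact h1
  · exact List.getLast?_concat
  · simp only [List.Chain'] at h3 ⊢; rw [List.isChain_append]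
    refine ⟨h3, List.isChain_singleton t, ?_⟩
    intro x hx y hy
    rw [h2, Option.mem_some_iff] at hx
    simp only [List.head?_cons, Option.mem_some_iff] at hy
    subst hx; subst hy; exact hqt

lemma monoPath_decomp {s t : ℤ × ℤ} {P : List (ℤ × ℤ)} (h : MonoPath s t P) (hst : s ≠ t) :
    ∃ Q q, P = Q ++ [t] ∧ MonoPath s q Q ∧
      (t = (q.1 + 1, q.2) ∨ t = (q.1, q.2 + 1)) := by
  obtain ⟨h1, h2, h3⟩ := h
  have hP : P ≠ [] := by rintro rfl; simp at h1
  have hsplit : P.dropLast ++ [t] = P := List.dropLast_append_getLast? _ h2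
  have hlen2 : 2 ≤ P.length := by
    rcases Nat.lt_or_ge P.length 2 with hl | hl
    · interval_cases hlen : P.length
      · simp at hP; exact absurd (List.length_eq_zero_iff.mp hlen) hP
      · obtain ⟨x, rfl⟩ := List.length_eq_one_iff.mp hlen
        simp only [List.head?_cons, Option.some_inj] at h1
        simp only [List.getLast?_singleton, Option.some_inj] at h2
        exact absurd (h1.symm.trans h2) hst
    · exact hl
  have hQne : P.dropLast ≠ [] := by
    have : P.dropLast.length = P.length - 1 := List.length_dropLast
    intro hc; rw [hc] at this; simp at this; omega
  refine ⟨P.dropLast, P.dropLast.getLast hQne, ?_, ⟨?_, ?_, ?_⟩, ?_⟩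
  · exact hsplit.symm
  · rw [← List.head?_append_of_ne_nil P.dropLast (l₂ := [t]) hQne, hsplit]; exact h1
  · exact (List.getLast?_eq_getLast hQne) ▸ rfl
  · have := h3; simp only [List.Chain'] at this; rw [← hsplit, List.isChain_append] at this; exact this.1
  · simp only [List.Chain'] at h3; rw [← hsplit, List.isChain_append] at h3
    exact h3.2.2 _ (by rw [List.getLast?_eq_getLast hQne]; rfl) t rfl

lemma pathSet_finite (s : ℤ × ℤ) : ∀ (N : ℕ) (t : ℤ × ℤ),
    (t.1 + t.2 - s.1 - s.2).toNat ≤ N → {P : List (ℤ × ℤ) | MonoPath s t P}.Finite := by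
  intro N
  induction N with
  | zero =>
    intro t hN
    by_cases hst : s = t
    · subst hst
      exact (Set.finite_singleton [s]).subset (fun P hP => monoPath_self hP)
    · convert Set.finite_empty
      rw [Set.eq_empty_iff_forall_notMem]
      intro P hP
      have hs := monoPath_stats hP
      have hlen : 2 ≤ P.length := by
        rcases Nat.lt_or_ge P.length 2 with hl | hl
        · exfalso
          have hne := monoPath_ne_nil hP
          interval_cases hlen : P.length
          · exact hne (List.length_eq_zero_iff.mp hlen)
          · obtain ⟨x, rfl⟩ := List.length_eq_one_iff.mp hlen
            obtain ⟨h1, h2, -⟩ := hP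
            simp only [List.head?_cons, Option.some_inj] at h1
            simp only [List.getLast?_singleton, Option.some_inj] at h2
            exact hst (h1.symm.trans h2)
        · exact hl
      omega
  | succ N IH =>
    intro t hN
    by_cases hst : s = t
    · subst hst
      exact (Set.finite_singleton [s]).subset (fun P hP => monoPath_self hP)
    · have himg : {P : List (ℤ × ℤ) | MonoPath s t P} ⊆
          (fun Q => Q ++ [t]) '' ({P | MonoPath s (t.1 - 1, t.2) P} ∪ {P | MonoPath s (t.1, t.2 - 1) P}) := by
        intro P hP
        obtain ⟨Q, q, rfl, hQ, hstep⟩ := monoPath_decomp hP hst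
        rcases hstep with h | h <;> rw [Prod.ext_iff] at h
        · refine ⟨Q, Or.inl ?_, rfl⟩
          have : q = (t.1 - 1, t.2) := by rw [Prod.ext_iff]; constructor <;> simp <;> omega
          rwa [this] at hQ
        · refine ⟨Q, Or.inr ?_, rfl⟩
          have : q = (t.1, t.2 - 1) := by rw [Prod.ext_iff]; constructor <;> simp <;> omega
          rwa [this] at hQ
      by_cases hle : s.1 ≤ t.1 ∧ s.2 ≤ t.2
      · have hpos : 1 ≤ t.1 + t.2 - s.1 - s.2 := by
          rcases Prod.ext_iff.not.mp hst with h
          by_contra hc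
          push_neg at hc
          apply hst
          rw [Prod.ext_iff]
          omega
        refine Set.Finite.subset (Set.Finite.image _ (Set.Finite.union ?_ ?_)) himg
        · exact IH (t.1 - 1, t.2) (by simp; omega)
        · exact IH (t.1, t.2 - 1) (by simp; omega)
      · convert Set.finite_empty
        rw [Set.eq_empty_iff_forall_notMem]
        intro P hP
        have hs := monoPath_stats hP
        push_neg at hle
        omega

lemma NW_set_finite (k r a b m n : ℤ) :
    {P : List (ℤ × ℤ) | MonoPath (a, b) (m, n) P ∧ ∀ p ∈ P, k * p.1 - r ≤ p.2}.Finite :=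
  (pathSet_finite (a, b) (m + n - a - b).toNat (m, n) le_rfl).subset (fun _ hP => hP.1)

lemma NW_eq_zero_back (k r a b m n : ℤ) (h : m < a ∨ n < b) : NW k r a b m n = 0 := by
  rw [NW]
  have he : {P : List (ℤ × ℤ) | MonoPath (a, b) (m, n) P ∧ ∀ p ∈ P, k * p.1 - r ≤ p.2} = ∅ := by
    rw [Set.eq_empty_iff_forall_notMem]
    intro P hP
    have hs := monoPath_stats hP.1
    simp only at hs
    omega
  rw [he, Set.ncard_empty]

lemma NW_eq_zero_below (k r a b m n : ℤ) (h : n < k * m - r) : NW k r a b m n = 0 := by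
  rw [NW]
  have he : {P : List (ℤ × ℤ) | MonoPath (a, b) (m, n) P ∧ ∀ p ∈ P, k * p.1 - r ≤ p.2} = ∅ := by
    rw [Set.eq_empty_iff_forall_notMem]
    intro P hP
    have := hP.2 (m, n) (monoPath_last_mem hP.1)
    simp only at this
    omega
  rw [he, Set.ncard_empty]

lemma NW_base (k r a b : ℤ) (h : k * a - r ≤ b) : NW k r a b a b = 1 := by
  rw [NW]
  convert Set.ncard_singleton ([((a : ℤ), (b : ℤ))])
  ext P
  simp only [Set.mem_setOf_eq, Set.mem_singleton_iff]
  constructor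
  · intro hP; exact monoPath_self hP.1
  · rintro rfl
    refine ⟨monoPath_singleton _, ?_⟩
    intro p hp
    simp only [List.mem_singleton] at hp
    subst hp
    simpa using h

lemma NW_rec (k r a b m n : ℤ) (hne : ((a, b) : ℤ × ℤ) ≠ (m, n)) (hline : k * m - r ≤ n) :
    NW k r a b m n = NW k r a b (m - 1) n + NW k r a b m (n - 1) := by
  have hS : {P : List (ℤ × ℤ) | MonoPath (a, b) (m, n) P ∧ ∀ p ∈ P, k * p.1 - r ≤ p.2} =
      (fun Q => Q ++ [((m, n) : ℤ × ℤ)]) ''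
        ({P | MonoPath (a, b) (m - 1, n) P ∧ ∀ p ∈ P, k * p.1 - r ≤ p.2} ∪
         {P | MonoPath (a, b) (m, n - 1) P ∧ ∀ p ∈ P, k * p.1 - r ≤ p.2}) := by
    ext P
    simp only [Set.mem_setOf_eq, Set.mem_image, Set.mem_union]
    constructor
    · rintro ⟨hP, habove⟩
      obtain ⟨Q, q, rfl, hQ, hstep⟩ := monoPath_decomp hP hne
      have hQab : ∀ p ∈ Q, k * p.1 - r ≤ p.2 := fun p hp =>
        habove p (List.mem_append_left _ hp)
      rcases hstep with h | h <;> rw [Prod.ext_iff] at h <;> simp only at h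
      · refine ⟨Q, Or.inl ⟨?_, hQab⟩, rfl⟩
        have : q = (m - 1, n) := by rw [Prod.ext_iff]; constructor <;> simp <;> omega
        rwa [this] at hQ
      · refine ⟨Q, Or.inr ⟨?_, hQab⟩, rfl⟩
        have : q = (m, n - 1) := by rw [Prod.ext_iff]; constructor <;> simp <;> omega
        rwa [this] at hQ
    · have habove : ∀ (Q : List (ℤ × ℤ)), (∀ p ∈ Q, k * p.1 - r ≤ p.2) →
          ∀ p ∈ Q ++ [((m, n) : ℤ × ℤ)], k * p.1 - r ≤ p.2 := by
        intro Q hQab p hp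
        rcases List.mem_append.mp hp with h | h
        · exact hQab p h
        · simp only [List.mem_singleton] at h
          subst h
          simpa using hline
      rintro ⟨Q, (⟨hQ, hQab⟩ | ⟨hQ, hQab⟩), rfl⟩
      · refine ⟨monoPath_concat hQ (Or.inl ?_), habove Q hQab⟩
        rw [Prod.ext_iff]
        constructor <;> simp
      · refine ⟨monoPath_concat hQ (Or.inr ?_), habove Q hQab⟩
        rw [Prod.ext_iff]
        constructor <;> simp
  have hinj : Function.Injective (fun Q : List (ℤ × ℤ) => Q ++ [((m, n) : ℤ × ℤ)]) := by
    intro x y hxy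
    simpa using List.append_inj_left' hxy rfl
  have hdisj : Disjoint
      {P : List (ℤ × ℤ) | MonoPath (a, b) (m - 1, n) P ∧ ∀ p ∈ P, k * p.1 - r ≤ p.2}
      {P : List (ℤ × ℤ) | MonoPath (a, b) (m, n - 1) P ∧ ∀ p ∈ P, k * p.1 - r ≤ p.2} := by
    rw [Set.disjoint_left]
    rintro P ⟨h1, -⟩ ⟨h2, -⟩
    have e1 := h1.2.1
    have e2 := h2.2.1
    rw [e1] at e2
    simp only [Option.some_inj, Prod.ext_iff] at e2
    omega
  rw [NW, NW, NW, hS, Set.ncard_image_of_injective _ hinj,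
    Set.ncard_union_eq hdisj (NW_set_finite _ _ _ _ _ _) (NW_set_finite _ _ _ _ _ _)]

lemma IC_zero_right (x : ℤ) : IC x 0 = 1 := by simp [IC]

lemma arith_key (k r u : ℤ) (hk : 1 ≤ k) (hr : 0 ≤ r) (hu : 1 ≤ u) (hur : k * r ≤ u) :
    ((u + 1 - k * (r - 1) : ℤ) : ℚ) / ((u + 1 : ℤ) : ℚ) * (IC (r + u - 1) (r - 1) : ℚ)
      + ((u - k * r : ℤ) : ℚ) / ((u : ℤ) : ℚ) * (IC (r + u - 1) r : ℚ)
      = ((u + 1 - k * r : ℤ) : ℚ) / ((u + 1 : ℤ) : ℚ) * (IC (r + u) r : ℚ) := by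
  have hu0 : ((u : ℤ) : ℚ) ≠ 0 := by exact_mod_cast (by omega : (u : ℤ) ≠ 0)
  have hu1 : ((u + 1 : ℤ) : ℚ) ≠ 0 := by exact_mod_cast (by omega : (u + 1 : ℤ) ≠ 0)
  rcases eq_or_lt_of_le hr with hr0 | hr1
  · -- r = 0
    subst hr0
    have i1 : IC (0 + u - 1) (0 - 1) = 0 := by rw [IC, if_pos (by norm_num)]
    have i2 : IC (0 + u - 1) 0 = 1 := IC_zero_right _
    have i3 : IC (0 + u) 0 = 1 := IC_zero_right _
    rw [i1, i2, i3]
    push_cast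
    field_simp
    ring
  · -- 1 ≤ r
    have hkr : 1 ≤ k * r := by nlinarith
    set R := r.toNat with hR
    set U := u.toNat with hU
    have hRr : (R : ℤ) = r := Int.toNat_of_nonneg hr
    have hUu : (U : ℤ) = u := Int.toNat_of_nonneg (by omega)
    have hR1 : 1 ≤ R := by omega
    have hU1 : 1 ≤ U := by omega
    have e1 : IC (r + u) r = (R + U).choose R := by
      rw [IC, if_neg (by omega)]
      congr 1 <;> omega
    have e2 : IC (r + u - 1) (r - 1) = (R + U - 1).choose (R - 1) := by
      rw [IC, if_neg (by omega)]
      congr 1 <;> omega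
    have e3 : IC (r + u - 1) r = (R + U - 1).choose R := by
      rw [IC, if_neg (by omega)]
      congr 1 <;> omega
    rw [e1, e2, e3]
    set X := (R + U - 1).choose (R - 1) with hX
    set Y := (R + U - 1).choose R with hY
    set Z := (R + U).choose R with hZ
    have hP : Z = X + Y := by
      have e := Nat.choose_succ_succ (R + U - 1) (R - 1)
      simp only [Nat.succ_eq_add_one] at e
      rw [show R - 1 + 1 = R by omega, show R + U - 1 + 1 = R + U by omega] at e
      rw [hX, hY, hZ]
      exact e
    have hXY : Y * R = X * U := by
      have := Nat.choose_succ_right_eq (R + U - 1) (R - 1)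
      rw [show R - 1 + 1 = R by omega] at this
      rw [show R + U - 1 - (R - 1) = U by omega] at this
      rw [hX, hY]
      exact this
    have cP : (Z : ℚ) = (X : ℚ) + (Y : ℚ) := by exact_mod_cast hP
    have cXY : (Y : ℚ) * ((r : ℤ) : ℚ) = (X : ℚ) * ((u : ℤ) : ℚ) := by
      rw [← hRr, ← hUu]
      exact_mod_cast hXY
    have hXeq : (X : ℚ) = (Y : ℚ) * ((r : ℤ) : ℚ) / ((u : ℤ) : ℚ) := by
      rw [eq_div_iff hu0]
      exact cXY.symm
    rw [cP, hXeq]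
    field_simp
    push_cast
    ring

lemma main_count (k a b : ℤ) (hk : 1 ≤ k) (ha : 0 ≤ a) (hb1 : k * a ≤ b) (hb2 : b ≤ k * a + k) :
    ∀ N : ℕ, ∀ m n : ℤ, (m + n - a - b).toNat = N → a ≤ m → b ≤ n → k * m ≤ n →
      (NW k 0 a b m n : ℚ) =
        ((n + 1 - k * m : ℤ) : ℚ) / ((n + 1 - k * a : ℤ) : ℚ) *
          (IC (m + n - (k + 1) * a) (m - a) : ℚ) := by
  intro N
  induction N using Nat.strong_induction_on with
  | _ N IH =>
    intro m n hN ham hbn hn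
    have hka : k * a ≤ k * m := by nlinarith
    by_cases hbase : m = a ∧ n = b
    · obtain ⟨rfl, rfl⟩ := hbase
      rw [NW_base _ _ _ _ (by omega)]
      rw [show m + n - (k + 1) * m = n - k * m by ring, show (m - m : ℤ) = 0 by ring,
        IC_zero_right]
      rw [div_mul_eq_mul_div, Nat.cast_one, mul_one, eq_comm, div_eq_one_iff_eq]
      exact_mod_cast (by omega : (n + 1 - k * m : ℤ) ≠ 0)
    · have hne : ((a, b) : ℤ × ℤ) ≠ (m, n) := by
        simp only [ne_eq, Prod.mk.injEq, not_and]
        intro e1 e2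
        exact hbase ⟨e1.symm, e2.symm⟩
      have hsum : a + b < m + n := by
        rcases (not_and_or.mp hbase) with h | h
        · have : a < m := lt_of_le_of_ne ham (Ne.symm h)
          omega
        · have : b < n := lt_of_le_of_ne hbn (Ne.symm h)
          omega
      have hN1 : 1 ≤ N := by omega
      rw [NW_rec _ _ _ _ _ _ hne (by omega), Nat.cast_add]
      have hu1 : 1 ≤ n - k * a := by
        by_cases hma : m = a
        · subst hma
          have : b < n := by
            rcases (not_and_or.mp hbase) with h | h
            · exact absurd rfl h
            · exact lt_of_le_of_ne hbn (Ne.symm h)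
          omega
        · have ham' : a + 1 ≤ m := by omega
          have : k * a + k ≤ k * m := by nlinarith
          omega
      have h1 : (NW k 0 a b (m - 1) n : ℚ) =
          ((n + 1 - k * (m - 1) : ℤ) : ℚ) / ((n + 1 - k * a : ℤ) : ℚ) *
            (IC (m + n - (k + 1) * a - 1) (m - a - 1) : ℚ) := by
        by_cases hma : a ≤ m - 1
        · have hkm1 : k * (m - 1) ≤ n := by nlinarith
          have := IH ((m - 1) + n - a - b).toNat (by omega) (m - 1) n rfl hma hbn hkm1
          rw [this]
          congr 2 <;> ring
        · have hma' : m = a := by omega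
          rw [NW_eq_zero_back _ _ _ _ _ _ (Or.inl (by omega))]
          have : IC (m + n - (k + 1) * a - 1) (m - a - 1) = 0 := by
            rw [IC, if_pos (by omega)]
          rw [this]
          simp
      have h2 : (NW k 0 a b m (n - 1) : ℚ) =
          ((n - k * m : ℤ) : ℚ) / ((n - k * a : ℤ) : ℚ) *
            (IC (m + n - (k + 1) * a - 1) (m - a) : ℚ) := by
        by_cases hkm : k * m ≤ n - 1
        · have hbn' : b ≤ n - 1 := by
            by_cases hma : m = a
            · subst hma
              have : b < n := by
                rcases (not_and_or.mp hbase) with h | h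
                · exact absurd rfl h
                · exact lt_of_le_of_ne hbn (Ne.symm h)
              omega
            · have ham' : a + 1 ≤ m := by omega
              have : k * a + k ≤ k * m := by nlinarith
              omega
          have := IH (m + (n - 1) - a - b).toNat (by omega) m (n - 1) rfl ham hbn' hkm
          rw [this]
          rw [show ((n - 1) + 1 - k * m : ℤ) = n - k * m by ring,
            show ((n - 1) + 1 - k * a : ℤ) = n - k * a by ring,
            show (m + (n - 1) - (k + 1) * a : ℤ) = m + n - (k + 1) * a - 1 by ring]
        · have hnkm : n = k * m := by omega
          rw [NW_eq_zero_below _ _ _ _ _ _ (by omega)]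
          rw [show ((n - k * m : ℤ) : ℚ) = 0 by exact_mod_cast (by omega : (n - k * m : ℤ) = 0)]
          simp
      rw [h1, h2]
      have key := arith_key k (m - a) (n - k * a) hk (by omega) hu1
        (by nlinarith)
      rw [show ((n - k * a) + 1 - k * ((m - a) - 1) : ℤ) = n + 1 - k * (m - 1) by ring,
        show ((n - k * a) + 1 - k * (m - a) : ℤ) = n + 1 - k * m by ring,
        show ((m - a) + (n - k * a) - 1 : ℤ) = m + n - (k + 1) * a - 1 by ring,
        show ((m - a) - 1 : ℤ) = m - a - 1 by ring,
        show ((n - k * a) - k * (m - a) : ℤ) = n - k * m by ring,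
        show ((m - a) + (n - k * a) : ℤ) = m + n - (k + 1) * a by ring,
        show ((n - k * a) + 1 : ℤ) = n + 1 - k * a by ring] at key
      exact key

theorem stmt1 (k a b m n : ℤ) (hk : 1 ≤ k) (hm : 1 ≤ m) (ha : 0 ≤ a) (hb : 0 ≤ b)
    (ham : a ≤ m) (hbn : b ≤ n) (hn : k * m ≤ n) (h1 : 0 ≤ b - k * a) (h2 : b - k * a ≤ k) :
    (NW k 0 a b m n : ℚ) =
      ((n + 1 - k * m : ℤ) : ℚ) / ((n + 1 - k * a : ℤ) : ℚ) *
        (IC (m + n - (k + 1) * a) (m - a) : ℚ) :=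
  main_count k a b hk ha (by omega) (by omega) (m + n - a - b).toNat m n rfl ham hbn hn
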